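/- Fix τ₀ ∈ (0,1) and positive reals γ₁, …, γ_K. Among all τ₁, …, τ_K > 0 with Σᵢ τᵢ = 1 − τ₀, the sum Σᵢ τᵢ · log₂(1 + γᵢ·τ₀/τᵢ) is maximized if and only if γᵢ·τ₀/τᵢ is the same constant for all i, namely equal to A·τ₀/(1−τ₀) where A = Σᵢ γᵢ; the unique maximizer is τᵢ* = γᵢ(1−τ₀)/A. -/

import Mathlib

open Finset Real

lemma jensen_aux (K : ℕ) (γ : Fin K → ℝ) (hγ : ∀ i, 0 < γ i) (τ₀ : ℝ)
    (h0 : 0 < τ₀) (h1 : τ₀ < 1)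
    (σ : Fin K → ℝ) (hσ : ∀ i, 0 < σ i) (hs : ∑ i, σ i = 1 - τ₀) :
    ∑ i, σ i * Real.log (1 + γ i * τ₀ / σ i) ≤
      (1 - τ₀) * Real.log (1 + (∑ j, γ j) * τ₀ / (1 - τ₀)) ∧
    ((∃ i, σ i ≠ γ i * (1 - τ₀) / ∑ j, γ j) →
      ∑ i, σ i * Real.log (1 + γ i * τ₀ / σ i) <
      (1 - τ₀) * Real.log (1 + (∑ j, γ j) * τ₀ / (1 - τ₀))) := by
  have h1τ : 0 < 1 - τ₀ := by linarith
  have hne : (Finset.univ : Finset (Fin K)).Nonempty := by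
    rcases (Finset.univ : Finset (Fin K)).eq_empty_or_nonempty with h | h
    · rw [h] at hs; simp at hs; linarith
    · exact h
  set A : ℝ := ∑ j, γ j with hA
  have hApos : 0 < A := Finset.sum_pos (fun i _ => hγ i) hne
  set c : ℝ := 1 + A * τ₀ / (1 - τ₀) with hc
  have hc1 : 1 < c := by
    have : 0 < A * τ₀ / (1 - τ₀) := by positivity
    simp [hc]; linarith
  have hc0 : 0 < c := by linarith
  have hx : ∀ i, 0 < 1 + γ i * τ₀ / σ i := by
    intro i
    have := hγ i; have := hσ i
    positivity
  -- per-term upper bound function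
  set g : Fin K → ℝ := fun i =>
    σ i * Real.log c + σ i * (1 / c) + γ i * (τ₀ / c) - σ i with hg
  have hgi : ∀ i, g i = σ i * (Real.log c + ((1 + γ i * τ₀ / σ i) - c) / c) := by
    intro i
    have hσi := (hσ i).ne'
    simp only [hg]
    field_simp
    ring
  have hle : ∀ i, σ i * Real.log (1 + γ i * τ₀ / σ i) ≤ g i := by
    intro i
    rw [hgi]
    refine mul_le_mul_of_nonneg_left ?_ (hσ i).le
    have h := Real.log_le_sub_one_of_pos (div_pos (hx i) hc0)
    rw [Real.log_div (hx i).ne' hc0.ne'] at h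
    have h2 : (1 + γ i * τ₀ / σ i) / c - 1 = ((1 + γ i * τ₀ / σ i) - c) / c := by
      field_simp
    linarith
  have hgsum : ∑ i, g i = (1 - τ₀) * Real.log c := by
    have : ∑ i, g i = (∑ i, σ i) * Real.log c + (∑ i, σ i) * (1 / c)
        + (∑ i, γ i) * (τ₀ / c) - ∑ i, σ i := by
      simp [hg, Finset.sum_sub_distrib, Finset.sum_add_distrib, Finset.sum_mul]
    rw [this, hs, ← hA]
    have hcc : (1 - τ₀) * c = (1 - τ₀) + A * τ₀ := by
      rw [hc]
      field_simp
    have hc0' : c ≠ 0 := hc0.ne'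
    have : (1 - τ₀) * (1 / c) + A * (τ₀ / c) - (1 - τ₀) = 0 := by
      field_simp
      linarith [hcc]
    linarith
  constructor
  · calc ∑ i, σ i * Real.log (1 + γ i * τ₀ / σ i) ≤ ∑ i, g i :=
          Finset.sum_le_sum fun i _ => hle i
      _ = (1 - τ₀) * Real.log c := hgsum
  · rintro ⟨i₀, hi₀⟩
    have hxc : (1 + γ i₀ * τ₀ / σ i₀) ≠ c := by
      intro h
      apply hi₀
      have h' : γ i₀ * τ₀ / σ i₀ = A * τ₀ / (1 - τ₀) := by
        rw [hc] at h; linarith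
      rw [div_eq_div_iff (hσ i₀).ne' h1τ.ne'] at h'
      rw [eq_div_iff hApos.ne']
      have := h0.ne'
      nlinarith [h']
    have hstrict : σ i₀ * Real.log (1 + γ i₀ * τ₀ / σ i₀) < g i₀ := by
      rw [hgi]
      refine mul_lt_mul_of_pos_left ?_ (hσ i₀)
      have h := Real.log_lt_sub_one_of_pos (div_pos (hx i₀) hc0)
        (by
          intro h
          apply hxc
          field_simp at h
          linarith)
      rw [Real.log_div (hx i₀).ne' hc0.ne'] at h
      have h2 : (1 + γ i₀ * τ₀ / σ i₀) / c - 1 = ((1 + γ i₀ * τ₀ / σ i₀) - c) / c := by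
        field_simp
      linarith
    calc ∑ i, σ i * Real.log (1 + γ i * τ₀ / σ i) < ∑ i, g i :=
          Finset.sum_lt_sum (fun i _ => hle i) ⟨i₀, Finset.mem_univ _, hstrict⟩
      _ = (1 - τ₀) * Real.log c := hgsum

theorem stmt_3 (K : ℕ) (hK : 0 < K) (γ : Fin K → ℝ) (hγ : ∀ i, 0 < γ i)
    (τ₀ : ℝ) (hτ₀ : τ₀ ∈ Set.Ioo (0 : ℝ) 1)
    (τ : Fin K → ℝ) (hτ : ∀ i, 0 < τ i) (hsum : ∑ i, τ i = 1 - τ₀) :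
    ((∀ σ : Fin K → ℝ, (∀ i, 0 < σ i) → ∑ i, σ i = 1 - τ₀ →
        ∑ i, σ i * Real.logb 2 (1 + γ i * τ₀ / σ i) ≤
        ∑ i, τ i * Real.logb 2 (1 + γ i * τ₀ / τ i)) ↔
      ∀ i, γ i * τ₀ / τ i = (∑ j, γ j) * τ₀ / (1 - τ₀)) ∧
    ((∀ σ : Fin K → ℝ, (∀ i, 0 < σ i) → ∑ i, σ i = 1 - τ₀ →
        ∑ i, σ i * Real.logb 2 (1 + γ i * τ₀ / σ i) ≤
        ∑ i, τ i * Real.logb 2 (1 + γ i * τ₀ / τ i)) ↔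
      ∀ i, τ i = γ i * (1 - τ₀) / ∑ j, γ j) := by
  obtain ⟨h0, h1⟩ := hτ₀
  have h1τ : 0 < 1 - τ₀ := by linarith
  set A : ℝ := ∑ j, γ j with hA
  have hApos : 0 < A := Finset.sum_pos (fun i _ => hγ i)
    (Finset.univ_nonempty_iff.mpr (Fin.pos_iff_nonempty.mp hK))
  have hlog2 : 0 < Real.log 2 := Real.log_pos one_lt_two
  -- convert logb sums to log sums
  have hconv : ∀ σ : Fin K → ℝ, ∑ i, σ i * Real.logb 2 (1 + γ i * τ₀ / σ i)
      = (∑ i, σ i * Real.log (1 + γ i * τ₀ / σ i)) / Real.log 2 := by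
    intro σ
    rw [Finset.sum_div]
    exact Finset.sum_congr rfl fun i _ => by rw [Real.logb]; ring
  set c : ℝ := 1 + A * τ₀ / (1 - τ₀) with hc
  -- the candidate optimum
  set T : Fin K → ℝ := fun i => γ i * (1 - τ₀) / A with hT
  have hTpos : ∀ i, 0 < T i := fun i => by
    have := hγ i; positivity
  have hTsum : ∑ i, T i = 1 - τ₀ := by
    simp only [hT]
    rw [← Finset.sum_div, ← Finset.sum_mul, ← hA]
    field_simp
  have hTx : ∀ i, γ i * τ₀ / T i = A * τ₀ / (1 - τ₀) := by
    intro i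
    rw [hT]
    rw [div_eq_div_iff (hTpos i).ne' h1τ.ne']
    simp only [hT]
    field_simp
  have hTval : ∑ i, T i * Real.log (1 + γ i * τ₀ / T i) = (1 - τ₀) * Real.log c := by
    calc ∑ i, T i * Real.log (1 + γ i * τ₀ / T i)
        = ∑ i, T i * Real.log c := Finset.sum_congr rfl fun i _ => by rw [hTx i, ← hc]
      _ = (∑ i, T i) * Real.log c := by rw [Finset.sum_mul]
      _ = (1 - τ₀) * Real.log c := by rw [hTsum]
  -- main equivalence
  have hmain : (∀ σ : Fin K → ℝ, (∀ i, 0 < σ i) → ∑ i, σ i = 1 - τ₀ →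
        ∑ i, σ i * Real.logb 2 (1 + γ i * τ₀ / σ i) ≤
        ∑ i, τ i * Real.logb 2 (1 + γ i * τ₀ / τ i)) ↔
      ∀ i, τ i = γ i * (1 - τ₀) / A := by
    constructor
    · intro hmax
      by_contra h
      push_neg at h
      have hstrict := (jensen_aux K γ hγ τ₀ h0 h1 τ hτ hsum).2 h
      have hge := hmax T hTpos hTsum
      rw [hconv, hconv, hTval] at hge
      have : (1 - τ₀) * Real.log c / Real.log 2 ≤
          (∑ i, τ i * Real.log (1 + γ i * τ₀ / τ i)) / Real.log 2 := hge
      have h2 : (1 - τ₀) * Real.log c ≤ ∑ i, τ i * Real.log (1 + γ i * τ₀ / τ i) :=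
        (div_le_div_iff_of_pos_right hlog2).mp this
      linarith
    · intro heq σ hσp hσs
      have hτT : τ = T := funext heq
      have hle := (jensen_aux K γ hγ τ₀ h0 h1 σ hσp hσs).1
      rw [hconv, hconv, hτT, hTval]
      exact div_le_div_of_nonneg_right hle hlog2.le
  constructor
  · rw [hmain]
    constructor
    · intro h i
      rw [h i, hTx i]
    · intro h i
      have hi := h i
      rw [div_eq_div_iff (hτ i).ne' h1τ.ne'] at hi
      rw [eq_div_iff hApos.ne']
      nlinarith [hi, h0.ne']
  · exact hmain
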